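/- Let p ∈ ℝ, a > 0, b > 0, let h : (0,∞) → ℝ be bounded and continuous, and set m_h = ∫₀^∞ h(t) g_{p,a,b}(t) dt. Then the function f_h defined on (0,∞) by f_h(x) = (1/(x² g_{p,a,b}(x))) ∫₀ˣ g_{p,a,b}(t)(h(t) − m_h) dt = −(1/(x² g_{p,a,b}(x))) ∫ₓ^∞ g_{p,a,b}(t)(h(t) − m_h) dt is differentiable and satisfies the GIG Stein equation x² f_h′(x) + (b/2 + (p+1)x − (a/2)x²) f_h(x) = h(x) − m_h for all x > 0. -/

import Mathlib

open MeasureTheory Set Filter Real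


private lemma pow_le_factorial_mul_exp (n : ℕ) {x : ℝ} (hx : 0 ≤ x) :
    x ^ n ≤ n.factorial * Real.exp x := by
  have h1 : x ^ n / n.factorial ≤ Real.exp x := by
    calc x ^ n / n.factorial
        ≤ ∑ i ∈ Finset.range (n+1), x ^ i / i.factorial := by
          refine Finset.single_le_sum (f := fun i => x ^ i / i.factorial) ?_
            (Finset.self_mem_range_succ n)
          intro i _; positivity
      _ ≤ Real.exp x := Real.sum_le_exp_of_nonneg hx _
  have hn : (0:ℝ) < n.factorial := by exact_mod_cast n.factorial_pos
  calc x ^ n = n.factorial * (x ^ n / n.factorial) := by field_simp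
    _ ≤ n.factorial * Real.exp x := mul_le_mul_of_nonneg_left h1 hn.le

private lemma pow_mul_exp_neg_le (n : ℕ) {x : ℝ} (hx : 0 ≤ x) :
    x ^ n * Real.exp (-x) ≤ n.factorial := by
  have := pow_le_factorial_mul_exp n hx
  have hE : (0:ℝ) < Real.exp (-x) := Real.exp_pos _
  calc x ^ n * Real.exp (-x) ≤ (n.factorial * Real.exp x) * Real.exp (-x) :=
        mul_le_mul_of_nonneg_right this hE.le
    _ = n.factorial := by rw [mul_assoc, ← Real.exp_add]; simp

private lemma gig_kernel_bound (p a b : ℝ) (ha : 0 < a) (hb : 0 < b) :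
    ∃ M : ℝ, ∀ t ∈ Set.Ioi (0:ℝ),
      t ^ (p-1) * Real.exp (-(a*t + b/t)/2) ≤ M * Real.exp (-(a/4) * t) := by
  set n : ℕ := ⌈|p| + 1⌉₊ with hn
  have hn1 : 1 - p ≤ (n : ℝ) := by
    have : |p| + 1 ≤ (n : ℝ) := Nat.le_ceil _
    have := neg_abs_le p
    linarith
  have hn2 : p - 1 ≤ (n : ℝ) := by
    have : |p| + 1 ≤ (n : ℝ) := Nat.le_ceil _
    have := le_abs_self p
    linarith
  refine ⟨max ((n.factorial * (2/b)^n) * Real.exp (a/4)) (n.factorial * (4/a)^n), ?_⟩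
  intro t ht
  have ht0 : 0 < t := ht
  rcases le_or_gt t 1 with h1 | h1
  · -- small t
    have e1 : Real.exp (-(a*t + b/t)/2) ≤ Real.exp (-(b/(2*t))) := by
      apply Real.exp_le_exp.mpr
      rw [neg_div]
      have : b/(2*t) ≤ (a*t + b/t)/2 := by
        rw [div_le_div_iff₀ (by positivity) (by norm_num)]
        have h2 : b / t * t = b := by field_simp
        nlinarith [mul_pos ha ht0]
      linarith
    have e2 : Real.exp (-(b/(2*t))) ≤ n.factorial * (2*t/b)^n := by
      have h := pow_mul_exp_neg_le n (x := b/(2*t)) (by positivity)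
      have hpow : (0:ℝ) < (b/(2*t))^n := by positivity
      rw [← le_div_iff₀' hpow] at h
      calc Real.exp (-(b/(2*t))) ≤ n.factorial / (b/(2*t))^n := h
        _ = n.factorial * (2*t/b)^n := by
            rw [div_eq_mul_inv, ← inv_pow]
            congr 2
            rw [inv_div]
    have e3 : t ^ (p-1) * ((2*t/b)^n) = (2/b)^n * t ^ (p-1+n) := by
      rw [Real.rpow_add ht0, Real.rpow_natCast]
      rw [div_pow, mul_pow, div_pow]
      field_simp
    have e4 : t ^ (p-1+n) ≤ 1 :=
      Real.rpow_le_one ht0.le h1 (by linarith)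
    have e5 : Real.exp (-(a/4)) ≤ Real.exp (-(a/4)*t) := by
      apply Real.exp_le_exp.mpr
      nlinarith
    have htp : 0 ≤ t ^ (p-1) := (Real.rpow_pos_of_pos ht0 _).le
    calc t ^ (p-1) * Real.exp (-(a*t + b/t)/2)
        ≤ t ^ (p-1) * (n.factorial * (2*t/b)^n) :=
          mul_le_mul_of_nonneg_left (e1.trans e2) htp
      _ = n.factorial * ((2/b)^n * t^(p-1+n)) := by
          rw [← mul_assoc, mul_comm (t ^ (p-1)) (n.factorial : ℝ), mul_assoc, e3]
      _ ≤ n.factorial * ((2/b)^n * 1) := by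
          have : (0:ℝ) ≤ (n.factorial : ℝ) := by positivity
          have h2b : (0:ℝ) ≤ (2/b)^n := by positivity
          exact mul_le_mul_of_nonneg_left (mul_le_mul_of_nonneg_left e4 h2b) this
      _ = (n.factorial * (2/b)^n) * (Real.exp (a/4) * Real.exp (-(a/4))) := by
          rw [← Real.exp_add]; simp
      _ ≤ (n.factorial * (2/b)^n * Real.exp (a/4)) * Real.exp (-(a/4)*t) := by
          rw [← mul_assoc]
          refine mul_le_mul_of_nonneg_left e5 (by positivity)
      _ ≤ _ := by
          refine mul_le_mul_of_nonneg_right (le_max_left _ _) (Real.exp_pos _).le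
  · -- large t
    have e1 : Real.exp (-(a*t + b/t)/2) ≤ Real.exp (-(a/4)*t) * Real.exp (-(a/4)*t) := by
      rw [← Real.exp_add]
      apply Real.exp_le_exp.mpr
      have : 0 < b / t := by positivity
      nlinarith
    have e2 : t ^ (p-1) ≤ t ^ (n:ℝ) :=
      Real.rpow_le_rpow_of_exponent_le h1.le hn2
    have e3 : t ^ (n:ℝ) * Real.exp (-(a/4)*t) ≤ n.factorial * (4/a)^n := by
      have h := pow_mul_exp_neg_le n (x := a/4*t) (by positivity)
      have : t^n = (4/a)^n * (a/4*t)^n := by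
        rw [← mul_pow]; congr 1; field_simp
      rw [Real.rpow_natCast, this, mul_assoc]
      have hx : -(a/4*t) = -(a/4)*t := by ring
      rw [← hx]
      calc (4/a)^n * ((a/4*t)^n * Real.exp (-(a/4*t)))
          ≤ (4/a)^n * n.factorial := mul_le_mul_of_nonneg_left h (by positivity)
        _ = n.factorial * (4/a)^n := by ring
    have hE : 0 ≤ Real.exp (-(a/4)*t) := (Real.exp_pos _).le
    have htp : 0 ≤ t ^ (p-1) := (Real.rpow_pos_of_pos ht0 _).le
    calc t ^ (p-1) * Real.exp (-(a*t + b/t)/2)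
        ≤ t ^ (p-1) * (Real.exp (-(a/4)*t) * Real.exp (-(a/4)*t)) :=
          mul_le_mul_of_nonneg_left e1 htp
      _ = (t ^ (p-1) * Real.exp (-(a/4)*t)) * Real.exp (-(a/4)*t) := by ring
      _ ≤ (t ^ (n:ℝ) * Real.exp (-(a/4)*t)) * Real.exp (-(a/4)*t) := by
          refine mul_le_mul_of_nonneg_right (mul_le_mul_of_nonneg_right e2 hE) hE
      _ ≤ (n.factorial * (4/a)^n) * Real.exp (-(a/4)*t) :=
          mul_le_mul_of_nonneg_right e3 hE
      _ ≤ _ := mul_le_mul_of_nonneg_right (le_max_right _ _) hE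

private lemma gig_kernel_continuousOn (p a b : ℝ) :
    ContinuousOn (fun t : ℝ => t ^ (p-1) * Real.exp (-(a*t + b/t)/2)) (Set.Ioi 0) := by
  apply ContinuousOn.mul
  · intro x hx
    exact (Real.continuousAt_rpow_const x _ (Or.inl (ne_of_gt hx))).continuousWithinAt
  · apply Real.continuous_exp.comp_continuousOn
    apply ContinuousOn.div_const
    apply ContinuousOn.neg
    apply ContinuousOn.add
    · exact (continuous_const.mul continuous_id).continuousOn
    · exact continuousOn_const.div continuousOn_id fun x hx => ne_of_gt hx

private lemma gig_kernel_integrableOn (p a b : ℝ) (ha : 0 < a) (hb : 0 < b) :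
    IntegrableOn (fun t : ℝ => t ^ (p-1) * Real.exp (-(a*t + b/t)/2)) (Set.Ioi 0) := by
  obtain ⟨M, hM⟩ := gig_kernel_bound p a b ha hb
  have hg : IntegrableOn (fun t : ℝ => M * Real.exp (-(a/4) * t)) (Set.Ioi 0) :=
    (exp_neg_integrableOn_Ioi 0 (by positivity : (0:ℝ) < a/4)).const_mul M
  refine Integrable.mono hg
    ((gig_kernel_continuousOn p a b).aestronglyMeasurable measurableSet_Ioi) ?_
  rw [ae_restrict_iff' measurableSet_Ioi]
  filter_upwards with t ht
  have ht0 : 0 < t := ht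
  have h0 : 0 ≤ t ^ (p-1) * Real.exp (-(a*t + b/t)/2) := by positivity
  rw [Real.norm_eq_abs, Real.norm_eq_abs, abs_of_nonneg h0]
  exact (hM t ht).trans (le_abs_self _)

private lemma gig_kernel_integral_pos (p a b : ℝ) (ha : 0 < a) (hb : 0 < b) :
    0 < ∫ t in Set.Ioi (0:ℝ), t ^ (p-1) * Real.exp (-(a*t + b/t)/2) := by
  rw [setIntegral_pos_iff_support_of_nonneg_ae]
  · refine lt_of_lt_of_le (show (0:ENNReal) < volume (Set.Ioi (0:ℝ)) by
      simp [Real.volume_Ioi]) (measure_mono ?_)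
    intro t ht
    have ht0 : (0:ℝ) < t := ht
    refine ⟨?_, ht⟩
    have : 0 < t ^ (p-1) * Real.exp (-(a*t + b/t)/2) := by positivity
    exact Function.mem_support.mpr (ne_of_gt this)
  · rw [EventuallyLE, ae_restrict_iff' measurableSet_Ioi]
    filter_upwards with t ht
    have ht0 : (0:ℝ) < t := ht
    have : 0 < t ^ (p-1) * Real.exp (-(a*t + b/t)/2) := by positivity
    exact this.le
  · exact gig_kernel_integrableOn p a b ha hb


/-- The generalized inverse Gaussian density with parameters `p ∈ ℝ`, `a > 0`, `b > 0`
(normalized by its total mass). -/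
noncomputable def gigDensity (p a b : ℝ) (x : ℝ) : ℝ :=
  (∫ t in Set.Ioi (0 : ℝ), t ^ (p - 1) * Real.exp (-(a * t + b / t) / 2))⁻¹ *
    (x ^ (p - 1) * Real.exp (-(a * x + b / x) / 2))

/-- the function
`f_h(x) = (x² g_{p,a,b}(x))⁻¹ ∫₀ˣ g_{p,a,b}(t)(h(t) − m_h) dt`
equals `−(x² g_{p,a,b}(x))⁻¹ ∫ₓ^∞ g_{p,a,b}(t)(h(t) − m_h) dt`, is differentiable, and
solves the GIG Stein equation on `(0,∞)`. -/
theorem gig_stein_equation_solution (p a b : ℝ) (ha : 0 < a) (hb : 0 < b)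
    (h : ℝ → ℝ) (hh_cont : ContinuousOn h (Set.Ioi 0))
    (hh_bdd : ∃ C, ∀ x ∈ Set.Ioi (0 : ℝ), |h x| ≤ C) :
    let m := ∫ t in Set.Ioi (0 : ℝ), h t * gigDensity p a b t
    let fh : ℝ → ℝ := fun x =>
      (x ^ 2 * gigDensity p a b x)⁻¹ * ∫ t in (0 : ℝ)..x, gigDensity p a b t * (h t - m)
    ∀ x ∈ Set.Ioi (0 : ℝ),
      (fh x = -((x ^ 2 * gigDensity p a b x)⁻¹ *
        ∫ t in Set.Ioi x, gigDensity p a b t * (h t - m))) ∧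
      DifferentiableAt ℝ fh x ∧
      x ^ 2 * deriv fh x + (b / 2 + (p + 1) * x - a / 2 * x ^ 2) * fh x = h x - m := by
  intro m fh x hx
  have hx0 : (0:ℝ) < x := hx
  obtain ⟨Ch, hCh⟩ := hh_bdd
  set C : ℝ := ∫ t in Set.Ioi (0:ℝ), t ^ (p - 1) * Real.exp (-(a * t + b / t) / 2) with hC
  have hgig : ∀ t : ℝ, gigDensity p a b t
      = C⁻¹ * (t ^ (p - 1) * Real.exp (-(a * t + b / t) / 2)) := fun t => rfl
  have hgig_fun : gigDensity p a b
      = fun t : ℝ => C⁻¹ * (t ^ (p - 1) * Real.exp (-(a * t + b / t) / 2)) := rfl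
  have hCpos : 0 < C := gig_kernel_integral_pos p a b ha hb
  have hg_pos : ∀ t ∈ Set.Ioi (0:ℝ), 0 < gigDensity p a b t := by
    intro t ht
    have ht0 : (0:ℝ) < t := ht
    rw [hgig t]
    exact mul_pos (inv_pos.mpr hCpos)
      (mul_pos (Real.rpow_pos_of_pos ht0 _) (Real.exp_pos _))
  have hg_cont : ContinuousOn (gigDensity p a b) (Set.Ioi 0) := by
    rw [hgig_fun]
    exact continuousOn_const.mul (gig_kernel_continuousOn p a b)
  have hg_int : IntegrableOn (gigDensity p a b) (Set.Ioi 0) := by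
    rw [hgig_fun]
    exact (gig_kernel_integrableOn p a b ha hb).const_mul _
  have hg_total : ∫ t in Set.Ioi (0:ℝ), gigDensity p a b t = 1 := by
    simp only [hgig]
    rw [MeasureTheory.integral_const_mul, ← hC, inv_mul_cancel₀ hCpos.ne']
  have hhg_int : IntegrableOn (fun t => h t * gigDensity p a b t) (Set.Ioi 0) := by
    refine Integrable.mono (hg_int.const_mul Ch)
      ((hh_cont.mul hg_cont).aestronglyMeasurable measurableSet_Ioi) ?_
    rw [ae_restrict_iff' measurableSet_Ioi]
    filter_upwards with t ht
    have h1 : 0 ≤ gigDensity p a b t := (hg_pos t ht).le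
    rw [Real.norm_eq_abs, Real.norm_eq_abs, abs_mul, abs_of_nonneg h1]
    exact (mul_le_mul_of_nonneg_right (hCh t ht) h1).trans (le_abs_self _)
  set ψ : ℝ → ℝ := fun t => gigDensity p a b t * (h t - m) with hψdef
  have hψ_eq : ψ = fun t => h t * gigDensity p a b t - m * gigDensity p a b t := by
    funext t; simp only [hψdef]; ring
  have hψ_int : IntegrableOn ψ (Set.Ioi 0) := by
    rw [hψ_eq]; exact hhg_int.sub (hg_int.const_mul m)
  have hψ_cont : ContinuousOn ψ (Set.Ioi 0) :=
    hg_cont.mul (hh_cont.sub continuousOn_const)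
  have hψ_total : (∫ t in Set.Ioi (0:ℝ), ψ t) = 0 := by
    rw [hψ_eq, integral_sub hhg_int (hg_int.const_mul m),
      MeasureTheory.integral_const_mul, hg_total]
    have hm : (∫ t in Set.Ioi (0:ℝ), h t * gigDensity p a b t) = m := rfl
    rw [hm]; ring
  have hIoc : IntegrableOn ψ (Set.Ioc 0 x) := hψ_int.mono_set Set.Ioc_subset_Ioi_self
  have hIoi : IntegrableOn ψ (Set.Ioi x) := hψ_int.mono_set (Set.Ioi_subset_Ioi hx0.le)
  have hsplit : (∫ t in Set.Ioc 0 x, ψ t) + ∫ t in Set.Ioi x, ψ t = 0 := by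
    rw [← MeasureTheory.setIntegral_union (Set.Ioc_disjoint_Ioi le_rfl) measurableSet_Ioi
      hIoc hIoi, Set.Ioc_union_Ioi_eq_Ioi hx0.le, hψ_total]
  have hFval : (∫ t in (0:ℝ)..x, ψ t) = -∫ t in Set.Ioi x, ψ t := by
    rw [intervalIntegral.integral_of_le hx0.le]; linarith
  have hgx_ne : gigDensity p a b x ≠ 0 := (hg_pos x hx).ne'
  have hGx_ne : x ^ 2 * gigDensity p a b x ≠ 0 := by
    exact mul_ne_zero (pow_ne_zero 2 hx0.ne') hgx_ne
  refine ⟨?_, ?_, ?_⟩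
  · show (x ^ 2 * gigDensity p a b x)⁻¹ * (∫ t in (0:ℝ)..x, ψ t)
      = -((x ^ 2 * gigDensity p a b x)⁻¹ * ∫ t in Set.Ioi x, ψ t)
    rw [hFval]; ring
  all_goals {
    have hFderiv : HasDerivAt (fun y => ∫ t in (0:ℝ)..y, ψ t) (ψ x) x := by
      refine intervalIntegral.integral_hasDerivAt_right ?_ ?_ ?_
      · rw [intervalIntegrable_iff, Set.uIoc_of_le hx0.le]; exact hIoc
      · exact hψ_cont.stronglyMeasurableAtFilter isOpen_Ioi x hx
      · exact hψ_cont.continuousAt (isOpen_Ioi.mem_nhds hx)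
    have hu : HasDerivAt (fun y : ℝ => -(a * y + b / y) / 2)
        (-(a * 1 + (0 * x - b * 1) / x ^ 2) / 2) x := by
      have h1 : HasDerivAt (fun y : ℝ => a * y) (a * 1) x :=
        (hasDerivAt_id x).const_mul a
      have h2 : HasDerivAt (fun y : ℝ => b / y) ((0 * x - b * 1) / x ^ 2) x :=
        (hasDerivAt_const x b).div (hasDerivAt_id x) hx0.ne'
      exact ((h1.add h2).neg).div_const 2
    have hE : HasDerivAt (fun y : ℝ => Real.exp (-(a * y + b / y) / 2))
        (Real.exp (-(a * x + b / x) / 2) * (-(a * 1 + (0 * x - b * 1) / x ^ 2) / 2)) x := hu.exp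
    have hR : HasDerivAt (fun y : ℝ => y ^ (p - 1)) ((p - 1) * x ^ (p - 1 - 1)) x :=
      Real.hasDerivAt_rpow_const (Or.inl hx0.ne')
    have hgD : HasDerivAt (gigDensity p a b)
        (C⁻¹ * ((p - 1) * x ^ (p - 1 - 1) * Real.exp (-(a * x + b / x) / 2)
          + x ^ (p - 1) * (Real.exp (-(a * x + b / x) / 2)
            * (-(a * 1 + (0 * x - b * 1) / x ^ 2) / 2)))) x := by
      rw [hgig_fun]
      exact (hR.mul hE).const_mul C⁻¹
    have hsq : HasDerivAt (fun y : ℝ => y ^ 2) (2 * x) x := by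
      simpa using hasDerivAt_pow 2 x
    have hGD : HasDerivAt (fun y : ℝ => y ^ 2 * gigDensity p a b y)
        ((b / 2 + (p + 1) * x - a / 2 * x ^ 2) * gigDensity p a b x) x := by
      refine (hsq.mul hgD).congr_deriv ?_
      rw [hgig x]
      have hxp : x ^ (p - 1 - 1) = x ^ (p - 1) / x := by
        rw [Real.rpow_sub hx0, Real.rpow_one]
      rw [hxp]
      field_simp
      ring
    have hfh_eq : fh = fun y =>
        (∫ t in (0:ℝ)..y, ψ t) / (y ^ 2 * gigDensity p a b y) := by
      funext y
      show (y ^ 2 * gigDensity p a b y)⁻¹ * (∫ t in (0:ℝ)..y, ψ t) = _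
      rw [div_eq_inv_mul]
    have hfhD : HasDerivAt fh
        ((ψ x * (x ^ 2 * gigDensity p a b x)
          - (∫ t in (0:ℝ)..x, ψ t) * ((b / 2 + (p + 1) * x - a / 2 * x ^ 2)
            * gigDensity p a b x)) / (x ^ 2 * gigDensity p a b x) ^ 2) x := by
      rw [hfh_eq]
      exact hFderiv.div hGD hGx_ne
    first
    | exact hfhD.differentiableAt
    | · rw [hfhD.deriv]
        have hfhx : fh x = (∫ t in (0:ℝ)..x, ψ t) / (x ^ 2 * gigDensity p a b x) := by
          rw [hfh_eq]
        rw [hfhx]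
        have hψx : ψ x = gigDensity p a b x * (h x - m) := rfl
        rw [hψx]
        field_simp
        ring
  }
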